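/- Let β > 0 and γ ∈ (0,1). Then for every integer n ≥ 1: if β < 1, then ∑_{k=1}^n k^{−1/2} (1 − γ/n^β)^k ≤ 1 + √(n^β π / γ); and if β ≥ 1, then ∑_{k=1}^n k^{−1/2} (1 − γ/n^β)^k ≤ 1 + 2√n. -/

import Mathlib

open Real Set MeasureTheory

lemma sum_inv_sqrt_le (n : ℕ) : ∑ k ∈ Finset.Icc 1 n, (1 / Real.sqrt k) ≤ 2 * Real.sqrt n := by
  induction n with
  | zero => simp
  | succ n ih =>
    rw [Finset.sum_Icc_succ_top (by norm_num)]
    have h1 : (0:ℝ) ≤ n := by positivity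
    have ha := Real.sq_sqrt h1
    have hb := Real.sq_sqrt (by positivity : (0:ℝ) ≤ (n:ℝ) + 1)
    have hbpos : 0 < Real.sqrt ((n:ℝ) + 1) := Real.sqrt_pos.2 (by positivity)
    have hanneg := Real.sqrt_nonneg (n:ℝ)
    have key : 1 / Real.sqrt ((n:ℝ) + 1) ≤ 2 * Real.sqrt ((n:ℝ)+1) - 2 * Real.sqrt n := by
      rw [div_le_iff₀ hbpos]
      nlinarith [sq_nonneg (Real.sqrt ((n:ℝ)+1) - Real.sqrt n)]
    push_cast
    push_cast at ih
    linarith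

lemma key_lemma (ε : ℝ) (hε0 : 0 < ε) (hε1 : ε < 1) (n : ℕ) :
    ∑ k ∈ Finset.Icc 1 n, (1 / Real.sqrt k) * (1 - ε) ^ k ≤ 1 + Real.sqrt (Real.pi / ε) := by
  have hsq : 0 ≤ Real.sqrt (Real.pi / ε) := Real.sqrt_nonneg _
  set f : ℝ → ℝ := fun x => x ^ (-(1/2) : ℝ) * Real.exp (-ε * x) with hf
  -- integrability
  have hInt : IntegrableOn f (Ioi 0) := by
    have := integrableOn_rpow_mul_exp_neg_mul_rpow (p := 1) (s := -(1/2)) (b := ε)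
      (by norm_num) (by norm_num) hε0
    refine this.congr_fun (fun x hx => ?_) measurableSet_Ioi
    simp [hf, Real.rpow_one]
  -- value of the full integral
  have hval : ∫ x in Ioi 0, f x = Real.sqrt (Real.pi / ε) := by
    have h := Real.integral_rpow_mul_exp_neg_mul_Ioi (a := 1/2) (r := ε) (by norm_num) hε0
    have heq : ∫ x in Ioi 0, f x = ∫ t in Ioi 0, t ^ ((1:ℝ)/2 - 1) * Real.exp (-(ε * t)) := by
      refine setIntegral_congr_fun measurableSet_Ioi (fun x hx => ?_)
      simp only [hf]
      norm_num
    rw [heq, h, Real.Gamma_one_half_eq, ← Real.sqrt_eq_rpow,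
      ← Real.sqrt_mul (by positivity), one_div, inv_mul_eq_div]
  -- pointwise bound: term k ≤ f k for k ≥ 1
  have hterm : ∀ k : ℕ, 1 ≤ k → (1 / Real.sqrt k) * (1 - ε) ^ k ≤ f k := by
    intro k hk
    have hk0 : (0:ℝ) < k := by exact_mod_cast hk
    have h1 : (1:ℝ) / Real.sqrt k = (k:ℝ) ^ (-(1/2) : ℝ) := by
      rw [Real.rpow_neg hk0.le, Real.sqrt_eq_rpow, one_div]
    have h2 : (1 - ε) ^ k ≤ Real.exp (-ε * k) := by
      have : (1 - ε) ≤ Real.exp (-ε) := by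
        have := Real.add_one_le_exp (-ε); linarith
      calc (1 - ε) ^ k ≤ Real.exp (-ε) ^ k :=
            pow_le_pow_left₀ (by linarith) this k
        _ = Real.exp (-ε * k) := by
            rw [← Real.exp_nat_mul]; ring_nf
    rw [h1, hf]
    exact mul_le_mul_of_nonneg_left h2 (Real.rpow_nonneg hk0.le _)
  rcases Nat.eq_zero_or_pos n with rfl | hn
  · simp; positivity
  -- split off k = 1
  have hsplit : Finset.Icc 1 n = insert 1 (Finset.Icc 2 n) := by
    ext k; simp [Finset.mem_Icc, Finset.mem_insert]; omega
  rw [hsplit, Finset.sum_insert (by simp [Finset.mem_Icc])]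
  have h1le : (1 / Real.sqrt 1) * (1 - ε) ^ 1 ≤ 1 := by
    simp; linarith
  have hrest : ∑ k ∈ Finset.Icc 2 n, (1 / Real.sqrt k) * (1 - ε) ^ k
      ≤ Real.sqrt (Real.pi / ε) := by
    have hstep1 : ∑ k ∈ Finset.Icc 2 n, (1 / Real.sqrt k) * (1 - ε) ^ k
        ≤ ∑ k ∈ Finset.Icc 2 n, f k := by
      refine Finset.sum_le_sum (fun k hk => ?_)
      exact hterm k (by simp [Finset.mem_Icc] at hk; omega)
    -- antitone
    have hanti : AntitoneOn f (Icc (1:ℝ) (1 + (n-1 : ℕ))) := by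
      intro x hx y hy hxy
      have hx1 : (1:ℝ) ≤ x := hx.1
      have := Real.rpow_le_rpow_of_nonpos (by linarith : (0:ℝ) < x) hxy (by norm_num : (-(1/2):ℝ) ≤ 0)
      exact mul_le_mul this (Real.exp_le_exp.2 (by nlinarith)) (Real.exp_pos _).le
        (Real.rpow_nonneg (by linarith) _)
    have hsum_int := hanti.sum_le_integral
    have hstep2 : ∑ k ∈ Finset.Icc 2 n, f k
        = ∑ i ∈ Finset.range (n-1), f (1 + ((i + 1 : ℕ) : ℝ)) := by
      rw [show Finset.Icc 2 n = Finset.Ico 2 (n+1) by rw [Finset.Ico_add_one_right_eq_Icc],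
        Finset.sum_Ico_eq_sum_range, show n + 1 - 2 = n - 1 by omega]
      refine Finset.sum_congr rfl (fun i _ => ?_)
      push_cast; ring_nf
    have hstep3 : (∫ x in (1:ℝ)..(1 + (n-1:ℕ)), f x) ≤ ∫ x in Ioi 0, f x := by
      rw [intervalIntegral.integral_of_le (le_add_of_nonneg_right (by positivity))]
      refine setIntegral_mono_set hInt ?_ ?_
      · filter_upwards [self_mem_ae_restrict measurableSet_Ioi] with x hx
        exact mul_nonneg (Real.rpow_nonneg (le_of_lt hx) _) (Real.exp_pos _).le
      · refine Filter.Eventually.of_forall (fun x hx => ?_)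
        exact lt_trans zero_lt_one hx.1
    calc ∑ k ∈ Finset.Icc 2 n, (1 / Real.sqrt k) * (1 - ε) ^ k
        ≤ ∑ i ∈ Finset.range (n-1), f (1 + ((i + 1 : ℕ) : ℝ)) := by rw [← hstep2]; exact hstep1
      _ ≤ ∫ x in (1:ℝ)..(1 + (n-1:ℕ)), f x := hsum_int
      _ ≤ ∫ x in Ioi 0, f x := hstep3
      _ = Real.sqrt (Real.pi / ε) := hval
  linarith

/-- Bound on `∑_{k=1}^n k^{−1/2}(1 − γ/n^β)^k`: at most `1 + √(n^β π/γ)` when `β < 1`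
and at most `1 + 2√n` when `β ≥ 1`. -/
theorem stmt_3 (β γ : ℝ) (hβ : 0 < β) (hγ : γ ∈ Set.Ioo (0:ℝ) 1) (n : ℕ) (hn : 1 ≤ n) :
    (β < 1 →
      ∑ k ∈ Finset.Icc 1 n, (1 / Real.sqrt k) * (1 - γ / (n : ℝ) ^ β) ^ k
        ≤ 1 + Real.sqrt ((n : ℝ) ^ β * Real.pi / γ)) ∧
    (1 ≤ β →
      ∑ k ∈ Finset.Icc 1 n, (1 / Real.sqrt k) * (1 - γ / (n : ℝ) ^ β) ^ k
        ≤ 1 + 2 * Real.sqrt n) := by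
  obtain ⟨hγ0, hγ1⟩ := hγ
  have hn1 : (1:ℝ) ≤ (n:ℝ) := by exact_mod_cast hn
  have hnb : (1:ℝ) ≤ (n:ℝ) ^ β := Real.one_le_rpow hn1 hβ.le
  have hnbpos : (0:ℝ) < (n:ℝ) ^ β := by linarith
  set ε := γ / (n:ℝ) ^ β with hε
  have hε0 : 0 < ε := by positivity
  have hε1 : ε < 1 := by
    rw [hε, div_lt_one hnbpos]; linarith
  constructor
  · intro _
    have h := key_lemma ε hε0 hε1 n
    have : Real.pi / ε = (n:ℝ) ^ β * Real.pi / γ := by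
      rw [hε]; field_simp
    rwa [this] at h
  · intro _
    have hbound : ∑ k ∈ Finset.Icc 1 n, (1 / Real.sqrt k) * (1 - ε) ^ k
        ≤ ∑ k ∈ Finset.Icc 1 n, (1 / Real.sqrt k) := by
      refine Finset.sum_le_sum (fun k hk => ?_)
      have h1 : (1 - ε) ^ k ≤ 1 := pow_le_one₀ (by linarith) (by linarith)
      have h2 : 0 ≤ 1 / Real.sqrt (k:ℝ) := by positivity
      nlinarith
    have := sum_inv_sqrt_le n
    linarith
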